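/- arXiv:2407.06956 — 3 statements merged into one kernel-verified Lean document; each statement's English description precedes it below -/
import Mathlib

section
/- The ind-completion of a preorder X, consisting of directed families in X ordered by the exceeds relation, has suprema of directed families: given a directed family of directed families α : I → Ind(X), the family α̂ : (Σ i, J i) → X, (i,j) ↦ α i j is directed and is a least upper bound with respect to ≲. -/
universe u

/-- `Exceeds α β` (written `α ≲ β`): `β` exceeds `α`, i.e. every member of `α`
is below some member of `β`. -/
def Exceeds {X : Type u} [Preorder X] {A B : Type u} (α : A → X) (β : B → X) : Prop :=
  ∀ a, ∃ b, α a ≤ β b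

theorem stmt10 {X : Type u} [Preorder X] (I : Type u) (J : I → Type u)
    (f : ∀ i, J i → X) (hI : Nonempty I) (hJ : ∀ i, Nonempty (J i))
    (hdir : ∀ i, Directed (· ≤ ·) (f i))
    (hsemi : ∀ i₁ i₂, ∃ i, Exceeds (f i₁) (f i) ∧ Exceeds (f i₂) (f i)) :
    Directed (· ≤ ·) (fun p : Σ i, J i => f p.1 p.2) ∧
    (∀ i, Exceeds (f i) (fun p : Σ i, J i => f p.1 p.2)) ∧
    (∀ (K : Type u) (β : K → X), Directed (· ≤ ·) β →
      (∀ i, Exceeds (f i) β) → Exceeds (fun p : Σ i, J i => f p.1 p.2) β) := by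
  refine ⟨?_, ?_, ?_⟩
  · rintro ⟨i₁, j₁⟩ ⟨i₂, j₂⟩
    obtain ⟨i, h₁, h₂⟩ := hsemi i₁ i₂
    obtain ⟨k₁, hk₁⟩ := h₁ j₁
    obtain ⟨k₂, hk₂⟩ := h₂ j₂
    obtain ⟨k, hka, hkb⟩ := hdir i k₁ k₂
    exact ⟨⟨i, k⟩, hk₁.trans hka, hk₂.trans hkb⟩
  · intro i j
    exact ⟨⟨i, j⟩, le_rfl⟩
  · rintro K β hβ hall ⟨i, j⟩
    exact hall i j
end

section
/- For a dcpo D, a directed family α : I → D approximates an element x (i.e., ⨆ α = x and α i ≪ x for all i) if and only if α is left adjunct to x (i.e., for every directed family β, α ≲ β ↔ x ⊑ ⨆ β). -/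
universe u

/-- A partial order is a dcpo if every nonempty directed family (indexed in the
same universe) has a least upper bound. -/
def IsDcpo (D : Type u) [PartialOrder D] : Prop :=
  ∀ (I : Type u) (α : I → D), Nonempty I → Directed (· ≤ ·) α →
    ∃ s, IsLUB (Set.range α) s

/-- `x` is way below `y`: every nonempty directed family whose supremum
dominates `y` has a member dominating `x`. -/
def WayBelow {D : Type u} [PartialOrder D] (x y : D) : Prop :=
  ∀ (I : Type u) (α : I → D), Nonempty I → Directed (· ≤ ·) α →
    ∀ s, IsLUB (Set.range α) s → y ≤ s → ∃ i, x ≤ α i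

theorem stmt11 {D : Type u} [PartialOrder D] (hD : IsDcpo D) (x : D)
    (I : Type u) (α : I → D) (hne : Nonempty I) (hdir : Directed (· ≤ ·) α) :
    (IsLUB (Set.range α) x ∧ ∀ i, WayBelow (α i) x) ↔
      (∀ (J : Type u) (β : J → D), Nonempty J → Directed (· ≤ ·) β →
        ∀ t, IsLUB (Set.range β) t → (Exceeds α β ↔ x ≤ t)) := by
  constructor
  · rintro ⟨hlub, hwb⟩ J β hJ hβ t ht
    constructor
    · intro hex
      refine hlub.2 (fun y hy => ?_)
      obtain ⟨i, rfl⟩ := hy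
      obtain ⟨j, hj⟩ := hex i
      exact hj.trans (ht.1 ⟨j, rfl⟩)
    · intro hxt i
      exact hwb i J β hJ hβ t ht hxt
  · intro h
    obtain ⟨s, hs⟩ := hD I α hne hdir
    have hxs : x ≤ s := (h I α hne hdir s hs).1 (fun i => ⟨i, le_refl _⟩)
    have hub : ∀ i, α i ≤ x := by
      have hconst : Directed (· ≤ ·) (fun _ : I => x) := fun a b => ⟨a, le_rfl, le_rfl⟩
      have hclub : IsLUB (Set.range (fun _ : I => x)) x := by
        constructor
        · rintro y ⟨j, rfl⟩; exact le_rfl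
        · intro y hy; exact hy ⟨hne.some, rfl⟩
      have := (h I (fun _ => x) hne hconst x hclub).2 le_rfl
      intro i; obtain ⟨j, hj⟩ := this i; exact hj
    have hlub : IsLUB (Set.range α) x := by
      constructor
      · rintro y ⟨i, rfl⟩; exact hub i
      · intro y hy; exact hxs.trans (hs.2 hy)
    refine ⟨hlub, fun i J β hJ hβ t ht hxt => (h J β hJ hβ t ht).2 hxt i⟩
end

section
/- If D is a Scott continuous retract of a continuous dcpo E (via section s : D → E and retraction r : E → D with r ∘ s = id), then D is continuous: for each x : D, the family r ∘ α_{s(x)} is directed, has supremum x, and each of its members is way below x. -/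
universe u

/-- Scott continuity: `f` sends suprema of nonempty directed families to
suprema of the image families. -/
def ScottCont {D E : Type u} [PartialOrder D] [PartialOrder E] (f : D → E) : Prop :=
  ∀ (I : Type u) (α : I → D) (s : D), Nonempty I → Directed (· ≤ ·) α →
    IsLUB (Set.range α) s → IsLUB (Set.range (f ∘ α)) (f s)

lemma ScottCont.mono {D E : Type u} [PartialOrder D] [PartialOrder E] {f : D → E}
    (hf : ScottCont f) : Monotone f := by
  intro a b hab
  set β : ULift.{u} Bool → D := fun i => if i.down then b else a with hβ
  have hd : Directed (· ≤ ·) β := by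
    intro i j
    exact ⟨⟨true⟩, by cases i; cases j; simp [hβ]; constructor <;> split <;> simp [hab]⟩
  have hl : IsLUB (Set.range β) b := by
    constructor
    · rintro _ ⟨i, rfl⟩; by_cases h : i.down <;> simp [hβ, h, hab]
    · intro c hc; exact hc ⟨⟨true⟩, by simp [hβ]⟩
  have := hf _ β b ⟨⟨true⟩⟩ hd hl
  exact this.1 ⟨⟨false⟩, by simp [hβ]⟩

theorem stmt17 {D E : Type u} [PartialOrder D] [PartialOrder E]
    (hD : IsDcpo D) (hE : IsDcpo E)
    (s : D → E) (r : E → D) (hs : ScottCont s) (hr : ScottCont r)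
    (hrs : ∀ x, r (s x) = x)
    (I : E → Type u) (α : ∀ e, I e → E)
    (hne : ∀ e, Nonempty (I e)) (hdir : ∀ e, Directed (· ≤ ·) (α e))
    (hlub : ∀ e, IsLUB (Set.range (α e)) e)
    (hwb : ∀ e i, WayBelow (α e i) e)
    (x : D) :
    Directed (· ≤ ·) (r ∘ α (s x)) ∧
    IsLUB (Set.range (r ∘ α (s x))) x ∧
    (∀ i, WayBelow (r (α (s x) i)) x) := by
  have hrm := hr.mono
  have hsm := hs.mono
  refine ⟨?_, ?_, ?_⟩
  · intro i j
    obtain ⟨k, hik, hjk⟩ := hdir (s x) i j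
    exact ⟨k, hrm hik, hrm hjk⟩
  · have := hr _ (α (s x)) (s x) (hne _) (hdir _) (hlub _)
    rwa [hrs] at this
  · intro i J β hJ hβd t ht hxt
    have hst := hs _ β t hJ hβd ht
    have hsxt : s x ≤ s t := hsm hxt
    obtain ⟨j, hj⟩ := hwb (s x) i _ (s ∘ β) hJ
      (fun a b => by obtain ⟨c, h1, h2⟩ := hβd a b; exact ⟨c, hsm h1, hsm h2⟩)
      (s t) hst hsxt
    exact ⟨j, by simpa [hrs] using hrm hj⟩
end
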